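/- Let A and B be nonempty disjoint compact subsets of the Euclidean plane ℝ². Then the 1-dimensional Hausdorff measure of the equidistant set E(A,B) is strictly positive, and for every x ∈ ℝ² and every r > 0 the 1-dimensional Hausdorff measure of E(A,B) ∩ closedBall(x,r) is finite. -/

import Mathlib

set_option maxHeartbeats 1000000
open Metric Set MeasureTheory
open scoped MeasureTheory RealInnerProductSpace ENNReal NNReal

noncomputable section

abbrev E2 : Type := EuclideanSpace ℝ (Fin 2)

/-- Rotation by 90 degrees in the Euclidean plane. -/
def rot90 (u : E2) : E2 := WithLp.toLp 2 ![-(u 1), u 0]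

lemma rot90_apply0 (u : E2) : rot90 u 0 = -(u 1) := rfl
lemma rot90_apply1 (u : E2) : rot90 u 1 = u 0 := rfl

lemma inner_expand (x y : E2) : ⟪x, y⟫ = x 0 * y 0 + x 1 * y 1 := by
  simp [PiLp.inner_apply, Fin.sum_univ_two]; ring

lemma norm_sq_expand (x : E2) : ‖x‖ ^ 2 = x 0 ^ 2 + x 1 ^ 2 := by
  rw [← real_inner_self_eq_norm_sq, inner_expand]; ring

lemma parseval2 (u w : E2) (hu : ‖u‖ = 1) :
    ⟪w, u⟫ ^ 2 + ⟪w, rot90 u⟫ ^ 2 = ‖w‖ ^ 2 := by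
  have h1 : u 0 ^ 2 + u 1 ^ 2 = 1 := by rw [← norm_sq_expand, hu]; norm_num
  rw [inner_expand, inner_expand, norm_sq_expand, rot90_apply0, rot90_apply1]
  nlinarith [sq_nonneg (w 0), sq_nonneg (w 1)]

lemma norm_rot90 (u : E2) : ‖rot90 u‖ = ‖u‖ := by
  have := norm_sq_expand (rot90 u)
  rw [rot90_apply0, rot90_apply1] at this
  have h2 := norm_sq_expand u
  have : ‖rot90 u‖ ^ 2 = ‖u‖ ^ 2 := by rw [this, h2]; ring
  nlinarith [norm_nonneg (rot90 u), norm_nonneg u]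

lemma key_ineq {d m t ε δ : ℝ} (hd : 0 < d) (hdm : d ≤ m) (ht0 : 0 < t) (ht : t ≤ 1/2)
    (hε0 : 0 ≤ ε) (hε1 : ε ≤ 1/2) (hεd : 4*ε*d^2 < δ^2) :
    0 < (m^2 - d^2) * (1 - t) + t * δ^2 - 2*ε*t*d*m := by
  have hm0 : 0 < m := lt_of_lt_of_le hd hdm
  rcases le_or_gt m (2*d) with hm | hm
  · have h1 : 2*ε*d*m ≤ 4*ε*d^2 := by nlinarith [mul_le_mul_of_nonneg_left hm (by positivity : (0:ℝ) ≤ 2*ε*d)]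
    have h2 : 0 < δ^2 - 2*ε*d*m := by nlinarith
    have h3 : 0 ≤ (m^2 - d^2)*(1-t) := by
      have := mul_nonneg (by nlinarith : (0:ℝ) ≤ m^2 - d^2) (by linarith : (0:ℝ) ≤ 1 - t)
      linarith
    nlinarith [mul_pos ht0 h2]
  · have ha : ε*t ≤ 1/4 := by nlinarith [mul_nonneg (by linarith : (0:ℝ) ≤ 1/2 - ε) (by linarith : (0:ℝ) ≤ 1/2 - t)]
    have hb : 2*ε*t*d*m ≤ (1/2)*(d*m) := by nlinarith [mul_le_mul_of_nonneg_right ha (by positivity : (0:ℝ) ≤ d*m)]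
    have hc : (1/2)*(d*m) ≤ m^2/4 := by nlinarith [mul_le_mul_of_nonneg_right (le_of_lt hm) (le_of_lt hm0)]
    have h3 : (3/8)*m^2 ≤ (m^2 - d^2)*(1-t) := by nlinarith [mul_le_mul_of_nonneg_right (by nlinarith : d^2 ≤ m^2/4) (by linarith : (0:ℝ) ≤ 1 - t)]
    nlinarith [mul_pos ht0 (by positivity : (0:ℝ) < δ^2 + 1), sq_nonneg δ, mul_nonneg ht0.le (sq_nonneg δ)]
open Metric Set MeasureTheory
open scoped MeasureTheory RealInnerProductSpace

lemma cone_exclusion {A B : Set E2} (hBne : B.Nonempty) (hBc : IsCompact B)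
    {δ ε : ℝ} (hε0 : 0 ≤ ε) (hε1 : ε ≤ 1/2)
    (hδ0 : 0 < δ)
    {x a : E2} (ha : a ∈ A) (hd : dist x a = infDist x A)
    (hd0 : 0 < dist x a)
    (hE : infDist x A = infDist x B)
    (hδ : ∀ b ∈ B, δ ≤ dist a b)
    (hεd : 4 * ε * (dist x a)^2 < δ^2)
    {w : E2} {t : ℝ} (ht0 : 0 < t) (ht : t ≤ 1/2)
    (htw : ⟪w, a - x⟫ = t * (dist x a)^2)
    (he : ‖w - t • (a - x)‖ ≤ ε * t * dist x a) :
    infDist (x + w) A < infDist (x + w) B := by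
  obtain ⟨b, hb, hbd⟩ := hBc.exists_infDist_eq_dist hBne (x + w)
  set d := dist x a with hdd
  set m := dist x b with hmd
  have hdm : d ≤ m := by
    rw [hd, hE]; exact infDist_le_dist_of_mem hb
  have hnax : ‖a - x‖ = d := by rw [hdd, dist_comm, dist_eq_norm]
  have hnbx : ‖b - x‖ = m := by rw [hmd, dist_comm, dist_eq_norm]
  have hδab : δ ≤ ‖a - b‖ := by rw [← dist_eq_norm]; exact hδ b hb
  -- inner product of a-x and b-x
  have hinner_ab : 2 * ⟪a - x, b - x⟫ = d^2 + m^2 - ‖a - b‖^2 := by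
    have h := norm_sub_sq_real (a - x) (b - x)
    have : a - x - (b - x) = a - b := by abel
    rw [this, hnax, hnbx] at h
    linarith
  -- bound on ⟪w, b - x⟫
  have hsplit : ⟪w, b - x⟫ = t * ⟪a - x, b - x⟫ + ⟪w - t • (a - x), b - x⟫ := by
    have h := inner_sub_left (𝕜 := ℝ) w (t • (a - x)) (b - x)
    rw [real_inner_smul_left] at h
    linarith
  have hcs : ⟪w - t • (a - x), b - x⟫ ≤ ε * t * d * m := by
    calc ⟪w - t • (a - x), b - x⟫ ≤ ‖w - t • (a - x)‖ * ‖b - x‖ := real_inner_le_norm _ _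
    _ ≤ (ε * t * d) * m := by
        rw [hnbx]
        exact mul_le_mul_of_nonneg_right he (by rw [← hnbx]; exact norm_nonneg _)
  have hwb : 2 * ⟪w, b - x⟫ ≤ t * (d^2 + m^2 - δ^2) + 2 * (ε * t * d * m) := by
    have hab2 : ‖a - b‖^2 ≥ δ^2 := by
      nlinarith [norm_nonneg (a - b)]
    nlinarith [hsplit, hcs, hinner_ab]
  -- squared distances
  have hda : dist (x + w) a ^ 2 = ‖w‖^2 - 2*⟪w, a - x⟫ + d^2 := by
    have : x + w - a = w - (a - x) := by abel
    rw [dist_eq_norm, this, norm_sub_sq_real, hnax]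
  have hdb : dist (x + w) b ^ 2 = ‖w‖^2 - 2*⟪w, b - x⟫ + m^2 := by
    have : x + w - b = w - (b - x) := by abel
    rw [dist_eq_norm, this, norm_sub_sq_real, hnbx]
  have hkey := key_ineq hd0 hdm ht0 ht hε0 hε1 hεd
  have hlt : dist (x + w) a ^ 2 < dist (x + w) b ^ 2 := by
    rw [hda, hdb, htw]; nlinarith
  have hfin : dist (x + w) a < dist (x + w) b :=
    lt_of_pow_lt_pow_left₀ 2 dist_nonneg hlt
  calc infDist (x + w) A ≤ dist (x + w) a := infDist_le_dist_of_mem ha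
  _ < dist (x + w) b := hfin
  _ = infDist (x + w) B := hbd.symm
lemma single_cone {A B : Set E2} (hBne : B.Nonempty) (hBc : IsCompact B)
    {δ ε : ℝ} (hδ0 : 0 < δ) (hε0 : 0 < ε) (hε1 : ε ≤ 1/2)
    {x a x' : E2} (ha : a ∈ A) (hd : dist x a = infDist x A)
    (hE : infDist x A = infDist x B) (hE' : infDist x' A = infDist x' B)
    (hδ : ∀ b ∈ B, δ ≤ dist a b)
    (hεd : 4 * ε * (dist x a)^2 < δ^2)
    (hd2 : δ/2 ≤ dist x a)
    (hnear : dist x x' ≤ δ/4) :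
    ⟪x' - x, (dist x a)⁻¹ • (a - x)⟫ ≤ (Real.sqrt (1 + ε^2))⁻¹ * ‖x' - x‖ := by
  set d := dist x a with hdd
  have hd0 : 0 < d := lt_of_lt_of_le (by linarith) hd2
  set w := x' - x with hw
  have hs0 : 0 < Real.sqrt (1 + ε^2) := Real.sqrt_pos.2 (by positivity)
  have hs2 : Real.sqrt (1 + ε^2) ^ 2 = 1 + ε^2 := Real.sq_sqrt (by positivity)
  have hinneru : ⟪w, d⁻¹ • (a - x)⟫ = d⁻¹ * ⟪w, a - x⟫ := real_inner_smul_right _ _ _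
  set p := ⟪w, a - x⟫ with hp
  rcases le_or_gt p 0 with hp0 | hp0
  · rw [hinneru]
    have : d⁻¹ * p ≤ 0 := mul_nonpos_of_nonneg_of_nonpos (by positivity) hp0
    exact le_trans this (by positivity)
  · set t := p / d^2 with htdef
    have ht0 : 0 < t := div_pos hp0 (by positivity)
    have hwn : ‖w‖ = dist x x' := by rw [hw, ← dist_eq_norm, dist_comm]
    have hcs : p ≤ ‖w‖ * d := by
      calc p ≤ ‖w‖ * ‖a - x‖ := real_inner_le_norm _ _
      _ = ‖w‖ * d := by rw [show ‖a - x‖ = d by rw [hdd, dist_comm, dist_eq_norm]]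
    have ht : t ≤ 1/2 := by
      have h1 : ‖w‖ ≤ δ/4 := by rw [hwn]; exact hnear
      have h2 : p ≤ (d/2) * d := le_trans hcs (by nlinarith)
      rw [htdef, div_le_iff₀ (by positivity : (0:ℝ) < d^2)]
      nlinarith
    have hd2ne : (d:ℝ)^2 ≠ 0 := pow_ne_zero 2 hd0.ne'
    have htw : ⟪w, a - x⟫ = t * d^2 := by
      rw [htdef, div_mul_cancel₀ _ hd2ne]
    -- the cone exclusion cannot apply since x' ∈ E
    have hnot : ¬ ‖w - t • (a - x)‖ ≤ ε * t * d := by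
      intro hcon
      have := cone_exclusion hBne hBc hε0.le hε1 hδ0 ha hd hd0 hE hδ hεd ht0 ht htw hcon
      rw [show x + w = x' by rw [hw]; abel] at this
      exact absurd hE' (ne_of_lt this)
    push_neg at hnot
    have hna : ‖a - x‖ = d := by rw [hdd, dist_comm, dist_eq_norm]
    have hexp : ‖w - t • (a - x)‖^2 = ‖w‖^2 - t^2 * d^2 := by
      rw [norm_sub_sq_real, real_inner_smul_right, norm_smul, hna, htw,
        Real.norm_eq_abs, abs_of_pos ht0]
      ring
    have hgt : ε^2 * t^2 * d^2 < ‖w‖^2 - t^2 * d^2 := by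
      have h := hnot
      nlinarith [norm_nonneg (w - t • (a - x)), mul_pos (mul_pos hε0 ht0) hd0]
    -- conclude
    have hq : ⟪w, d⁻¹ • (a - x)⟫ = t * d := by
      rw [hinneru, hp, htw]
      field_simp
    rw [hq]
    have htd0 : 0 < t * d := mul_pos ht0 hd0
    have hsq : (t * d * Real.sqrt (1 + ε^2))^2 < ‖w‖^2 := by
      have heq : (t * d * Real.sqrt (1 + ε^2))^2 = (1 + ε^2) * (t^2 * d^2) := by
        rw [mul_pow, hs2]; ring
      rw [heq]; nlinarith
    have hlt : t * d * Real.sqrt (1 + ε^2) < ‖w‖ :=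
      lt_of_pow_lt_pow_left₀ 2 (norm_nonneg _) hsq
    have hfin : t * d ≤ (Real.sqrt (1 + ε^2))⁻¹ * ‖w‖ := by
      have h2 := mul_le_mul_of_nonneg_left hlt.le (inv_nonneg.2 hs0.le)
      calc t * d = (Real.sqrt (1 + ε^2))⁻¹ * (t * d * Real.sqrt (1 + ε^2)) := by
            field_simp
      _ ≤ _ := h2
    linarith [hq, hfin]
lemma finite_of_coLipschitz {S : Set E2} {g : E2 → ℝ} {c M : ℝ} (hc : 0 < c)
    (hco : ∀ x ∈ S, ∀ y ∈ S, c * dist x y ≤ dist (g x) (g y))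
    (hbd : ∀ x ∈ S, |g x| ≤ M) :
    μH[1] S < ⊤ := by
  rcases S.eq_empty_or_nonempty with hS | ⟨x₀, hx₀⟩
  · simp [hS]
  classical
  set h : ℝ → E2 := fun ξ => if hr : ∃ x ∈ S, g x = ξ then hr.choose else x₀ with hh
  have hmem : ∀ ξ, (∃ x ∈ S, g x = ξ) → h ξ ∈ S ∧ g (h ξ) = ξ := by
    intro ξ hξ
    rw [hh]; simp only [dif_pos hξ]
    exact ⟨hξ.choose_spec.1, hξ.choose_spec.2⟩
  have hinv : ∀ x ∈ S, h (g x) = x := by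
    intro x hx
    obtain ⟨hmem1, hmem2⟩ := hmem (g x) ⟨x, hx, rfl⟩
    have := hco _ hmem1 _ hx
    rw [hmem2] at this
    simp only [dist_self] at this
    have hd : dist (h (g x)) x ≤ 0 := by
      nlinarith [dist_nonneg (x := h (g x)) (y := x)]
    exact dist_le_zero.1 hd
  have hlip : LipschitzOnWith (c⁻¹).toNNReal h (g '' S) := by
    rw [lipschitzOnWith_iff_dist_le_mul]
    rintro ξ ⟨x, hx, rfl⟩ ξ' ⟨x', hx', rfl⟩
    rw [hinv x hx, hinv x' hx']
    have h1 := hco x hx x' hx'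
    rw [Real.coe_toNNReal _ (by positivity)]
    rw [← le_div_iff₀' hc] at h1
    rw [div_eq_inv_mul] at h1
    exact h1
  have hSeq : S = h '' (g '' S) := by
    apply Subset.antisymm
    · intro x hx
      exact ⟨g x, ⟨x, hx, rfl⟩, hinv x hx⟩
    · rintro _ ⟨ξ, ⟨x, hx, rfl⟩, rfl⟩
      rw [hinv x hx]; exact hx
  have h1 : μH[1] S ≤ ((c⁻¹).toNNReal : ℝ≥0∞) ^ (1:ℝ) * μH[1] (g '' S) := by
    nth_rewrite 1 [hSeq]
    exact hlip.hausdorffMeasure_image_le zero_le_one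
  have h2 : μH[1] (g '' S) ≤ μH[1] (Icc (-M) M) := by
    apply measure_mono
    rintro _ ⟨x, hx, rfl⟩
    exact abs_le.1 (hbd x hx)
  have h3 : μH[1] (Icc (-M) M) < ⊤ := by
    rw [MeasureTheory.hausdorffMeasure_real, Real.volume_Icc]
    exact ENNReal.ofReal_lt_top
  calc μH[1] S ≤ ((c⁻¹).toNNReal : ℝ≥0∞) ^ (1:ℝ) * μH[1] (g '' S) := h1
  _ < ⊤ := ENNReal.mul_lt_top (by simp) (lt_of_le_of_lt h2 h3)

lemma double_cone {A B : Set E2} (hBne : B.Nonempty) (hBc : IsCompact B)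
    {δ ε : ℝ} (hδ0 : 0 < δ) (hε0 : 0 < ε) (hε1 : ε ≤ 1/2)
    {x x' cc : E2} (hcc : ‖cc‖ = 1)
    (hxE : infDist x A = infDist x B) (hx'E : infDist x' A = infDist x' B)
    {a a' : E2} (ha : a ∈ A) (ha' : a' ∈ A)
    (hd : dist x a = infDist x A) (hd' : dist x' a' = infDist x' A)
    (hδa : ∀ b ∈ B, δ ≤ dist a b) (hδa' : ∀ b ∈ B, δ ≤ dist a' b)
    (hεd : 4 * ε * (dist x a)^2 < δ^2) (hεd' : 4 * ε * (dist x' a')^2 < δ^2)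
    (hd2 : δ/2 ≤ dist x a) (hd2' : δ/2 ≤ dist x' a')
    (hnear : dist x x' ≤ δ/4)
    (hux : ‖(dist x a)⁻¹ • (a - x) - cc‖ ≤ (1 - (Real.sqrt (1 + ε^2))⁻¹)/2)
    (hux' : ‖(dist x' a')⁻¹ • (a' - x') - cc‖ ≤ (1 - (Real.sqrt (1 + ε^2))⁻¹)/2) :
    Real.sqrt (1 - ((1 + (Real.sqrt (1 + ε^2))⁻¹)/2)^2) * dist x x' ≤
      dist (⟪x, rot90 cc⟫) (⟪x', rot90 cc⟫) := by
  set κ := (Real.sqrt (1 + ε^2))⁻¹ with hκ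
  set ρ := (1 - κ)/2 with hρ
  set β := (1 + κ)/2 with hβ
  have hs1 : (1:ℝ) < Real.sqrt (1 + ε^2) := by
    exact (Real.lt_sqrt (by norm_num)).2 (by nlinarith)
  have hκ0 : 0 < κ := by rw [hκ]; positivity
  have hκ1 : κ < 1 := by rw [hκ]; exact inv_lt_one_of_one_lt₀ hs1
  have hβ1 : β < 1 := by rw [hβ]; linarith
  have hβ0 : 0 < β := by rw [hβ]; linarith
  set w := x' - x with hw
  have hwn : ‖w‖ = dist x x' := by rw [hw, ← dist_eq_norm, dist_comm]
  -- one-sided bounds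
  have hone := single_cone hBne hBc hδ0 hε0 hε1 ha hd hxE hx'E hδa hεd hd2 hnear
  have htwo := single_cone hBne hBc hδ0 hε0 hε1 ha' hd' hx'E hxE hδa' hεd' hd2'
    (by rw [dist_comm]; exact hnear)
  -- bound |⟪w, cc⟫| ≤ β‖w‖
  have hq1 : ⟪w, cc⟫ ≤ β * ‖w‖ := by
    have hsplit : ⟪w, cc⟫ = ⟪w, (dist x a)⁻¹ • (a - x)⟫ +
        ⟪w, cc - (dist x a)⁻¹ • (a - x)⟫ := by
      rw [← inner_add_right]; congr 1; abel
    have hcs : ⟪w, cc - (dist x a)⁻¹ • (a - x)⟫ ≤ ρ * ‖w‖ := by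
      calc ⟪w, cc - (dist x a)⁻¹ • (a - x)⟫ ≤ ‖w‖ * ‖cc - (dist x a)⁻¹ • (a - x)‖ :=
            real_inner_le_norm _ _
      _ ≤ ‖w‖ * ρ := by
          apply mul_le_mul_of_nonneg_left _ (norm_nonneg _)
          rw [norm_sub_rev]; exact hux
      _ = ρ * ‖w‖ := by ring
    have : κ * ‖w‖ + ρ * ‖w‖ = β * ‖w‖ := by rw [hρ, hβ]; ring
    have h1 : ⟪w, (dist x a)⁻¹ • (a - x)⟫ ≤ κ * ‖w‖ := by
      have := hone; rw [hκ]; linarith [hone]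
    linarith [hsplit, hcs, h1]
  have hq2 : -(β * ‖w‖) ≤ ⟪w, cc⟫ := by
    have hw' : x - x' = -w := by rw [hw]; abel
    have hnw : ‖x - x'‖ = ‖w‖ := by rw [hw']; simp
    have hsplit : ⟪x - x', cc⟫ = ⟪x - x', (dist x' a')⁻¹ • (a' - x')⟫ +
        ⟪x - x', cc - (dist x' a')⁻¹ • (a' - x')⟫ := by
      rw [← inner_add_right]; congr 1; abel
    have hcs : ⟪x - x', cc - (dist x' a')⁻¹ • (a' - x')⟫ ≤ ρ * ‖w‖ := by
      calc ⟪x - x', cc - (dist x' a')⁻¹ • (a' - x')⟫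
          ≤ ‖x - x'‖ * ‖cc - (dist x' a')⁻¹ • (a' - x')‖ := real_inner_le_norm _ _
      _ ≤ ‖w‖ * ρ := by
          rw [hnw]
          apply mul_le_mul_of_nonneg_left _ (norm_nonneg _)
          rw [norm_sub_rev]; exact hux'
      _ = ρ * ‖w‖ := by ring
    have h1 : ⟪x - x', (dist x' a')⁻¹ • (a' - x')⟫ ≤ κ * ‖x - x'‖ := by
      rw [hκ]; exact htwo
    have hneg : ⟪x - x', cc⟫ = -⟪w, cc⟫ := by rw [hw', inner_neg_left]
    rw [hnw] at h1
    have : ⟪x - x', cc⟫ ≤ β * ‖w‖ := by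
      have hsum : κ * ‖w‖ + ρ * ‖w‖ = β * ‖w‖ := by rw [hρ, hβ]; ring
      linarith [hsplit, hcs, h1]
    linarith [hneg ▸ this]
  -- Parseval
  have hpar := parseval2 cc w hcc
  have hq : ⟪w, cc⟫^2 ≤ β^2 * ‖w‖^2 := by
    have habs : |⟪w, cc⟫| ≤ β * ‖w‖ := abs_le.2 ⟨hq2, hq1⟩
    nlinarith [abs_nonneg (⟪w, cc⟫), sq_abs (⟪w, cc⟫)]
  have hperp : (1 - β^2) * ‖w‖^2 ≤ ⟪w, rot90 cc⟫^2 := by nlinarith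
  have hγ2 : Real.sqrt (1 - β^2) ^ 2 = 1 - β^2 := Real.sq_sqrt (by nlinarith)
  have hfin : (Real.sqrt (1 - β^2) * ‖w‖)^2 ≤ ⟪w, rot90 cc⟫^2 := by
    rw [mul_pow, hγ2]; exact hperp
  have habs2 : Real.sqrt (1 - β^2) * ‖w‖ ≤ |⟪w, rot90 cc⟫| := by
    have h0 : 0 ≤ Real.sqrt (1 - β^2) * ‖w‖ := by positivity
    nlinarith [abs_nonneg (⟪w, rot90 cc⟫), sq_abs (⟪w, rot90 cc⟫)]
  have hdiff : ⟪x', rot90 cc⟫ - ⟪x, rot90 cc⟫ = ⟪w, rot90 cc⟫ := by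
    rw [hw, inner_sub_left]
  rw [Real.dist_eq, ← hwn]
  calc Real.sqrt (1 - β^2) * ‖w‖ ≤ |⟪w, rot90 cc⟫| := habs2
  _ = |⟪x, rot90 cc⟫ - ⟪x', rot90 cc⟫| := by rw [← hdiff, abs_sub_comm]
  _ = _ := rfl
/-- The equidistant set determined by two subsets of a metric space. -/
def equidistantSet {X : Type*} [MetricSpace X] (A B : Set X) : Set X :=
  {x | Metric.infDist x A = Metric.infDist x B}

lemma equidistant_pos {A B : Set E2} (hA : A.Nonempty) (hB : B.Nonempty)
    (hAB : Disjoint A B) (hAcpt : IsCompact A) (hBcpt : IsCompact B) :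
    0 < μH[1] (equidistantSet A B) := by
  obtain ⟨a, ha⟩ := hA
  obtain ⟨b, hb⟩ := hB
  have hda : 0 < infDist a B :=
    (hBcpt.isClosed.notMem_iff_infDist_pos ⟨b, hb⟩).1 (disjoint_left.1 hAB ha)
  have hdb : 0 < infDist b A :=
    (hAcpt.isClosed.notMem_iff_infDist_pos ⟨a, ha⟩).1 (disjoint_right.1 hAB hb)
  set v : E2 := b - a with hv
  have hvne : v ≠ 0 := by
    rw [hv, sub_ne_zero]
    intro h
    rw [← h] at ha
    exact disjoint_left.1 hAB ha hb
  have hvn : 0 < ‖v‖ := norm_pos_iff.2 hvne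
  set u : E2 := ‖v‖⁻¹ • rot90 v with hu
  have hu1 : ‖u‖ = 1 := by
    rw [hu, norm_smul, norm_rot90, Real.norm_eq_abs, abs_inv, abs_of_pos hvn]
    field_simp
  have huv : ⟪v, u⟫ = 0 := by
    rw [hu, real_inner_smul_right, inner_expand, rot90_apply0, rot90_apply1]
    ring
  have huu : ⟪u, u⟫ = 1 := by
    rw [real_inner_self_eq_norm_sq, hu1]; norm_num
  set ε₀ := min (infDist a B) (infDist b A) / 4 with hε₀
  have hε₀0 : 0 < ε₀ := by
    rw [hε₀]
    have := lt_min hda hdb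
    positivity
  -- for each s ∈ [0, ε₀] there is an equidistant point with projection ⟪a,u⟫ + s
  have hkey : ∀ s ∈ Icc (0:ℝ) ε₀, ∃ y ∈ equidistantSet A B, ⟪y, u⟫ = ⟪a, u⟫ + s := by
    intro s hs
    obtain ⟨hs0, hsε⟩ := hs
    set p : E2 := a + s • u with hp
    set q : E2 := b + s • u with hq
    set f : E2 → ℝ := fun y => infDist y A - infDist y B with hf
    have hfc : Continuous f := (continuous_infDist_pt A).sub (continuous_infDist_pt B)
    have hdpa : dist p a = s := by
      rw [hp, dist_eq_norm, add_sub_cancel_left, norm_smul, Real.norm_eq_abs,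
        abs_of_nonneg hs0, hu1, mul_one]
    have hdqb : dist q b = s := by
      rw [hq, dist_eq_norm, add_sub_cancel_left, norm_smul, Real.norm_eq_abs,
        abs_of_nonneg hs0, hu1, mul_one]
    have hfp : f p < 0 := by
      have h1 : infDist p A ≤ s := by
        rw [← hdpa]; exact infDist_le_dist_of_mem ha
      have h2 : infDist a B ≤ infDist p B + dist a p := infDist_le_infDist_add_dist
      rw [dist_comm] at h2
      have h3 : s ≤ infDist a B / 4 := le_trans hsε (by rw [hε₀]; gcongr; exact min_le_left _ _)
      simp only [hf]
      rw [hdpa] at h2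
      linarith
    have hfq : 0 < f q := by
      have h1 : infDist q B ≤ s := by
        rw [← hdqb]; exact infDist_le_dist_of_mem hb
      have h2 : infDist b A ≤ infDist q A + dist b q := infDist_le_infDist_add_dist
      rw [dist_comm] at h2
      have h3 : s ≤ infDist b A / 4 := le_trans hsε (by rw [hε₀]; gcongr; exact min_le_right _ _)
      simp only [hf]
      rw [hdqb] at h2
      linarith
    set γ : ℝ → E2 := fun τ => p + τ • (q - p) with hγ
    have hγc : Continuous γ := by
      rw [hγ]; exact continuous_const.add (continuous_id.smul continuous_const)
    clear_value v u p q f γ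
    have hγ0 : γ 0 = p := by simp [hγ]
    have hγ1 : γ 1 = q := by simp [hγ]
    have hivt := intermediate_value_Icc (zero_le_one (α := ℝ)) (hfc.comp hγc).continuousOn
    simp only [Function.comp_apply, hγ0, hγ1] at hivt
    have h0mem : (0:ℝ) ∈ Icc (f p) (f q) := ⟨hfp.le, hfq.le⟩
    obtain ⟨τ, hτ, hfτ⟩ := hivt h0mem
    refine ⟨γ τ, ?_, ?_⟩
    · have hfτ' : f (γ τ) = 0 := hfτ
      rw [hf] at hfτ'
      simp only at hfτ'
      exact sub_eq_zero.1 hfτ'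
    · have hqp : q - p = v := by rw [hq, hp, hv]; abel
      have e1 : ⟪γ τ, u⟫ = ⟪p, u⟫ + τ * ⟪q - p, u⟫ := by
        rw [hγ]
        rw [inner_add_left, real_inner_smul_left]
      have e2 : ⟪p, u⟫ = ⟪a, u⟫ + s * ⟪u, u⟫ := by
        rw [hp, inner_add_left, real_inner_smul_left]
      rw [e1, e2, hqp, huu, huv]
      ring
  -- projection is 1-Lipschitz
  set π : E2 → ℝ := fun y => ⟪y, u⟫ with hπ
  have hπlip : LipschitzWith 1 π := by
    apply LipschitzWith.of_dist_le_mul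
    intro y y'
    rw [Real.dist_eq, hπ]
    simp only
    rw [← inner_sub_left]
    calc |⟪y - y', u⟫| ≤ ‖y - y'‖ * ‖u‖ := abs_real_inner_le_norm _ _
    _ = 1 * dist y y' := by rw [hu1, dist_eq_norm]; ring
  have hsub : Icc (⟪a, u⟫) (⟪a, u⟫ + ε₀) ⊆ π '' equidistantSet A B := by
    intro ξ hξ
    obtain ⟨y, hyE, hyπ⟩ := hkey (ξ - ⟪a, u⟫) ⟨by linarith [hξ.1], by linarith [hξ.2]⟩
    exact ⟨y, hyE, by rw [hπ]; simp only; rw [hyπ]; ring⟩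
  have h1 : μH[1] (Icc (⟪a, u⟫) (⟪a, u⟫ + ε₀)) ≤ μH[1] (π '' equidistantSet A B) :=
    measure_mono hsub
  have h2 : μH[1] (π '' equidistantSet A B) ≤ μH[1] (equidistantSet A B) := by
    have := hπlip.hausdorffMeasure_image_le zero_le_one (equidistantSet A B)
    simpa using this
  have h3 : μH[1] (Icc (⟪a, u⟫) (⟪a, u⟫ + ε₀)) = ENNReal.ofReal ε₀ := by
    rw [MeasureTheory.hausdorffMeasure_real, Real.volume_Icc]
    congr 1
    ring
  have h4 : 0 < ENNReal.ofReal ε₀ := ENNReal.ofReal_pos.2 hε₀0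
  calc (0:ℝ≥0∞) < ENNReal.ofReal ε₀ := h4
  _ = μH[1] (Icc (⟪a, u⟫) (⟪a, u⟫ + ε₀)) := h3.symm
  _ ≤ μH[1] (π '' equidistantSet A B) := h1
  _ ≤ μH[1] (equidistantSet A B) := h2
lemma equidistant_locally_finite {A B : Set E2} (hA : A.Nonempty) (hB : B.Nonempty)
    (hAB : Disjoint A B) (hAcpt : IsCompact A) (hBcpt : IsCompact B)
    (z : E2) (r : ℝ) (hr : 0 < r) :
    μH[1] (equidistantSet A B ∩ Metric.closedBall z r) < ⊤ := by
  classical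
  -- separation constant
  obtain ⟨a₀, ha₀A, ha₀min⟩ := hAcpt.exists_isMinOn hA (continuous_infDist_pt B).continuousOn
  set δ := infDist a₀ B with hδdef
  have hδ0 : 0 < δ := (hBcpt.isClosed.notMem_iff_infDist_pos hB).1 (disjoint_left.1 hAB ha₀A)
  have hδsep : ∀ a ∈ A, ∀ b ∈ B, δ ≤ dist a b := by
    intro a haA b hbB
    calc δ ≤ infDist a B := ha₀min haA
    _ ≤ dist a b := infDist_le_dist_of_mem hbB
  -- lower bound for the distance to A on the equidistant set
  have hdlow : ∀ x ∈ equidistantSet A B, δ/2 ≤ infDist x A := by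
    intro x hx
    obtain ⟨a, haA, hda⟩ := hAcpt.exists_infDist_eq_dist hA x
    obtain ⟨b, hbB, hdb⟩ := hBcpt.exists_infDist_eq_dist hB x
    have h1 : δ ≤ dist a b := hδsep a haA b hbB
    have h2 : dist a b ≤ dist a x + dist x b := dist_triangle a x b
    have h3 : infDist x A = infDist x B := hx
    rw [dist_comm a x] at h2
    linarith [hda, hdb, h2, h1, h3]
  -- nearest point selection
  choose na hnaA hnad using fun x : E2 => hAcpt.exists_infDist_eq_dist hA x
  -- the scale constants
  set D1 : ℝ := infDist z A + r + 1 with hD1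
  have hD10 : 0 < D1 := by
    have := infDist_nonneg (x := z) (s := A); rw [hD1]; linarith
  set ε : ℝ := min (δ^2/(8*D1^2)) (1/2) with hεdef
  have hε0 : 0 < ε := lt_min (by positivity) (by norm_num)
  have hε1 : ε ≤ 1/2 := min_le_right _ _
  -- distance bound on the ball
  have hDbd : ∀ x ∈ closedBall z r, infDist x A < D1 := by
    intro x hx
    have h1 : infDist x A ≤ infDist z A + dist x z := infDist_le_infDist_add_dist
    have h2 : dist x z ≤ r := mem_closedBall.1 hx
    rw [hD1]; linarith
  have hεd : ∀ x ∈ equidistantSet A B ∩ closedBall z r, 4 * ε * (dist x (na x))^2 < δ^2 := by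
    rintro x ⟨hxE, hxb⟩
    have h1 : dist x (na x) = infDist x A := (hnad x).symm
    have h2 : dist x (na x) < D1 := h1 ▸ hDbd x hxb
    have h3 : 0 ≤ dist x (na x) := dist_nonneg
    have h4 : ε ≤ δ^2/(8*D1^2) := min_le_left _ _
    have h5 : (dist x (na x))^2 < D1^2 := by nlinarith
    have h6 : 4 * ε * (dist x (na x))^2 ≤ 4 * (δ^2/(8*D1^2)) * (dist x (na x))^2 := by
      apply mul_le_mul_of_nonneg_right _ (sq_nonneg _)
      linarith
    have h7 : 4 * (δ^2/(8*D1^2)) * (dist x (na x))^2 < 4 * (δ^2/(8*D1^2)) * D1^2 := by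
      apply mul_lt_mul_of_pos_left h5 (by positivity)
    have h8 : 4 * (δ^2/(8*D1^2)) * D1^2 = δ^2/2 := by field_simp; ring
    nlinarith
  have hd2 : ∀ x ∈ equidistantSet A B, δ/2 ≤ dist x (na x) := by
    intro x hx
    rw [show dist x (na x) = infDist x A from (hnad x).symm]
    exact hdlow x hx
  have hdpos : ∀ x ∈ equidistantSet A B, 0 < dist x (na x) := fun x hx =>
    lt_of_lt_of_le (by linarith) (hd2 x hx)
  -- geometric constants for the graph decomposition
  set κ : ℝ := (Real.sqrt (1 + ε^2))⁻¹ with hκdef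
  have hs1 : (1:ℝ) < Real.sqrt (1 + ε^2) := (Real.lt_sqrt (by norm_num)).2 (by nlinarith)
  have hκ0 : 0 < κ := by rw [hκdef]; positivity
  have hκ1 : κ < 1 := by rw [hκdef]; exact inv_lt_one_of_one_lt₀ hs1
  set ρ : ℝ := (1 - κ)/2 with hρdef
  have hρ0 : 0 < ρ := by rw [hρdef]; linarith
  set β : ℝ := (1 + κ)/2 with hβdef
  have hβ0 : 0 < β := by rw [hβdef]; linarith
  have hβ1 : β < 1 := by rw [hβdef]; linarith
  set γ : ℝ := Real.sqrt (1 - β^2) with hγdef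
  have hγ0 : 0 < γ := by rw [hγdef]; exact Real.sqrt_pos.2 (by nlinarith)
  -- unit direction field
  set uu : E2 → E2 := fun x => (dist x (na x))⁻¹ • (na x - x) with huu
  have huu1 : ∀ x ∈ equidistantSet A B, ‖uu x‖ = 1 := by
    intro x hx
    have hd0 : 0 < dist x (na x) := hdpos x hx
    rw [huu]
    simp only
    rw [norm_smul, Real.norm_eq_abs, abs_inv, abs_of_pos hd0,
      show ‖na x - x‖ = dist x (na x) by rw [dist_comm, dist_eq_norm]]
    field_simp
  -- finite covers
  obtain ⟨T, hTsub, hTfin, hTcov⟩ :=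
    (isCompact_sphere (0:E2) 1).finite_cover_balls (e := ρ) hρ0
  obtain ⟨P, hPsub, hPfin, hPcov⟩ :=
    (isCompact_closedBall z r).finite_cover_balls (e := δ/8) (by positivity)
  -- pieces
  set SS : E2 × E2 → Set E2 := fun q =>
    {x | (x ∈ equidistantSet A B ∧ x ∈ closedBall z r) ∧
      ‖uu x - q.1‖ < ρ ∧ dist x q.2 < δ/8} with hSS
  have hcover : equidistantSet A B ∩ closedBall z r ⊆ ⋃ q ∈ T ×ˢ P, SS q := by
    rintro x ⟨hxE, hxb⟩
    have hx1 : uu x ∈ sphere (0:E2) 1 := by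
      rw [mem_sphere_zero_iff_norm]; exact huu1 x hxE
    obtain ⟨cc, hccT, hcc⟩ := mem_iUnion₂.1 (hTcov hx1)
    obtain ⟨p, hpP, hp⟩ := mem_iUnion₂.1 (hPcov hxb)
    refine mem_iUnion₂.2 ⟨(cc, p), Set.mem_prod.2 ⟨hccT, hpP⟩, ?_⟩
    refine ⟨⟨hxE, hxb⟩, ?_, hp⟩
    rw [← dist_eq_norm]; exact hcc
  have hpiece : ∀ q ∈ T ×ˢ P, μH[1] (SS q) < ⊤ := by
    rintro ⟨cc, p⟩ hq
    have hccT : cc ∈ T := (Set.mem_prod.1 hq).1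
    have hcc1 : ‖cc‖ = 1 := mem_sphere_zero_iff_norm.1 (hTsub hccT)
    apply finite_of_coLipschitz (g := fun y => ⟪y, rot90 cc⟫) (c := γ) (M := ‖z‖ + r) hγ0
    · -- co-Lipschitz
      rintro x ⟨⟨hxE, hxb⟩, hxc, hxp⟩ x' ⟨⟨hx'E, hx'b⟩, hx'c, hx'p⟩
      have hnear : dist x x' ≤ δ/4 := by
        have hx'p' : dist p x' ≤ δ/8 := by rw [dist_comm]; exact hx'p.le
        calc dist x x' ≤ dist x p + dist p x' := dist_triangle x p x'
        _ ≤ δ/8 + δ/8 := add_le_add hxp.le hx'p'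
        _ = δ/4 := by ring
      have hmain := double_cone (A := A) hB hBcpt hδ0 hε0 hε1 hcc1 hxE hx'E
        (hnaA x) (hnaA x') ((hnad x).symm) ((hnad x').symm)
        (fun b hb => hδsep (na x) (hnaA x) b hb)
        (fun b hb => hδsep (na x') (hnaA x') b hb)
        (hεd x ⟨hxE, hxb⟩) (hεd x' ⟨hx'E, hx'b⟩)
        (hd2 x hxE) (hd2 x' hx'E) hnear
        (by
          have h := le_of_lt hxc
          rw [hρdef, hκdef] at h
          exact h)
        (by
          have h := le_of_lt hx'c
          rw [hρdef, hκdef] at h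
          exact h)
      rw [hγdef, hβdef, hκdef]
      exact hmain
    · -- boundedness
      rintro y ⟨⟨hyE, hyb⟩, -, -⟩
      have h1 : |⟪y, rot90 cc⟫| ≤ ‖y‖ * ‖rot90 cc‖ := abs_real_inner_le_norm _ _
      rw [norm_rot90, hcc1, mul_one] at h1
      have h2 : ‖y‖ - ‖z‖ ≤ ‖y - z‖ := norm_sub_norm_le y z
      have h3 : ‖y - z‖ ≤ r := by rw [← dist_eq_norm]; exact mem_closedBall.1 hyb
      linarith
  calc μH[1] (equidistantSet A B ∩ closedBall z r) ≤ μH[1] (⋃ q ∈ T ×ˢ P, SS q) :=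
        measure_mono hcover
  _ < ⊤ := measure_biUnion_lt_top (hTfin.prod hPfin) hpiece
/-- For nonempty disjoint compact subsets `A`, `B` of the Euclidean plane, the
1-dimensional Hausdorff measure of `E(A,B)` is strictly positive, and its intersection
with any closed ball of positive radius has finite 1-dimensional Hausdorff measure. -/
theorem hausdorffMeasure_equidistantSet
    (A B : Set (EuclideanSpace ℝ (Fin 2)))
    (hA : A.Nonempty) (hB : B.Nonempty) (hAB : Disjoint A B)
    (hAcpt : IsCompact A) (hBcpt : IsCompact B) :
    0 < μH[1] (equidistantSet A B) ∧
      ∀ (x : EuclideanSpace ℝ (Fin 2)) (r : ℝ), 0 < r →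
        μH[1] (equidistantSet A B ∩ Metric.closedBall x r) < ⊤ := by
  exact ⟨equidistant_pos hA hB hAB hAcpt hBcpt,
    fun x r hr => equidistant_locally_finite hA hB hAB hAcpt hBcpt x r hr⟩
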